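/- arXiv:2308.05817 — 5 statements merged into one kernel-verified Lean document; each statement's English description precedes it below -/
import Mathlib

section
/- Let j, ℓ be positive integers, let G be a graph and let U, V be disjoint subsets of its vertex set such that every u ∈ U has at least one neighbour in V, and every v ∈ V has at most j neighbours in U. If |U| ≥ 2jℓ, then there exist X ⊆ U and Y ⊆ V with |X| = |Y| = ℓ such that the bipartite graph between X and Y induced by G is a perfect matching (i.e., there is a bijection X → Y matching each x to a neighbour, and no other edges of G between X and Y). -/
/-- Lemma 5.4 (deggeq): if every `u ∈ U` has a neighbour in `V`, every `v ∈ V` has at most `j`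
neighbours in `U`, and `|U| ≥ 2jℓ`, then there are `X ⊆ U`, `Y ⊆ V` of size `ℓ` such that the
bipartite graph of `G` between `X` and `Y` is a perfect matching (an induced matching `ℓ P₂`). -/
theorem stmt_4 {α : Type*} [DecidableEq α] (j ℓ : ℕ) (hj : 1 ≤ j) (hℓ : 1 ≤ ℓ)
    (G : SimpleGraph α) (U V : Finset α) (hUV : Disjoint U V)
    (hU : ∀ u ∈ U, ∃ v ∈ V, G.Adj u v)
    (hV : ∀ v ∈ V, ({u ∈ (U : Set α) | G.Adj v u}).ncard ≤ j)
    (hcard : 2 * j * ℓ ≤ U.card) :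
    ∃ (X Y : Finset α) (f : α → α), X ⊆ U ∧ Y ⊆ V ∧ X.card = ℓ ∧ Y.card = ℓ ∧
      Set.InjOn f X ∧ Y = X.image f ∧
      (∀ x ∈ X, G.Adj x (f x)) ∧
      (∀ x ∈ X, ∀ y ∈ Y, G.Adj x y → y = f x) := by
  classical
  -- take a minimal dominating subset W of V
  set D : Finset (Finset α) :=
    V.powerset.filter (fun W => ∀ u ∈ U, ∃ v ∈ W, G.Adj u v) with hD
  have hVD : V ∈ D := by
    rw [hD, Finset.mem_filter]
    exact ⟨Finset.mem_powerset.2 le_rfl, hU⟩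
  obtain ⟨W, hWmem, hWmin⟩ := Finset.exists_min_image D Finset.card ⟨V, hVD⟩
  rw [hD, Finset.mem_filter] at hWmem
  have hWV : W ⊆ V := Finset.mem_powerset.1 hWmem.1
  have hWdom : ∀ u ∈ U, ∃ v ∈ W, G.Adj u v := hWmem.2
  -- each v ∈ W has a private neighbour in U
  have hpriv : ∀ v ∈ W, ∃ u ∈ U, G.Adj u v ∧ ∀ w ∈ W, G.Adj u w → w = v := by
    intro v hv
    have herase : ¬ (∀ u ∈ U, ∃ w ∈ W.erase v, G.Adj u w) := by
      intro hP
      have hmem : W.erase v ∈ D := by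
        rw [hD, Finset.mem_filter]
        exact ⟨Finset.mem_powerset.2 ((Finset.erase_subset _ _).trans hWV), hP⟩
      have h1 := hWmin _ hmem
      have h2 := Finset.card_erase_lt_of_mem hv
      omega
    push_neg at herase
    obtain ⟨u, hu, hnadj⟩ := herase
    refine ⟨u, hu, ?_, ?_⟩
    · obtain ⟨w, hw, hadj⟩ := hWdom u hu
      have hwv : w = v := by
        by_contra hne
        exact hnadj w (Finset.mem_erase.2 ⟨hne, hw⟩) hadj
      exact hwv ▸ hadj
    · intro w hw hadj
      by_contra hne
      exact hnadj w (Finset.mem_erase.2 ⟨hne, hw⟩) hadj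
  have hpriv' : ∀ v, ∃ u, v ∈ W → (u ∈ U ∧ G.Adj u v ∧ ∀ w ∈ W, G.Adj u w → w = v) := by
    intro v
    by_cases hv : v ∈ W
    · obtain ⟨u, hu, h1, h2⟩ := hpriv v hv
      exact ⟨u, fun _ => ⟨hu, h1, h2⟩⟩
    · exact ⟨v, fun h => absurd h hv⟩
  choose g hg using hpriv'
  -- cardinality: |U| ≤ j * |W|
  have hfiltercard : ∀ v ∈ W, (U.filter (fun u => G.Adj v u)).card ≤ j := by
    intro v hv
    have h := hV v (hWV hv)
    have heq : {u ∈ (U : Set α) | G.Adj v u} = ↑(U.filter (fun u => G.Adj v u)) := by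
      ext u; simp
    rw [heq, Set.ncard_coe_finset] at h
    exact h
  have hsub : U ⊆ W.biUnion (fun v => U.filter (fun u => G.Adj v u)) := by
    intro u hu
    obtain ⟨v, hv, hadj⟩ := hWdom u hu
    exact Finset.mem_biUnion.2 ⟨v, hv, Finset.mem_filter.2 ⟨hu, hadj.symm⟩⟩
  have hUW : U.card ≤ j * W.card := by
    calc U.card ≤ (W.biUnion (fun v => U.filter (fun u => G.Adj v u))).card :=
          Finset.card_le_card hsub
      _ ≤ ∑ v ∈ W, (U.filter (fun u => G.Adj v u)).card := Finset.card_biUnion_le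
      _ ≤ ∑ _v ∈ W, j := Finset.sum_le_sum hfiltercard
      _ = j * W.card := by rw [Finset.sum_const, smul_eq_mul, Nat.mul_comm]
  have hℓW : ℓ ≤ W.card := by
    have h1 : j * ℓ ≤ j * W.card := by
      calc j * ℓ ≤ 2 * j * ℓ := by nlinarith
        _ ≤ U.card := hcard
        _ ≤ j * W.card := hUW
    exact Nat.le_of_mul_le_mul_left h1 (by omega)
  obtain ⟨Y, hYW, hYcard⟩ := Finset.exists_subset_card_eq hℓW
  have hgprop : ∀ v ∈ Y, g v ∈ U ∧ G.Adj (g v) v ∧ ∀ w ∈ W, G.Adj (g v) w → w = v :=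
    fun v hv => hg v (hYW hv)
  have hginj : Set.InjOn g ↑Y := by
    intro v1 hv1 v2 hv2 heq
    obtain ⟨_, hadj1, _⟩ := hgprop v1 hv1
    obtain ⟨_, _, huniq2⟩ := hgprop v2 hv2
    exact huniq2 v1 (hYW hv1) (heq ▸ hadj1)
  set X : Finset α := Y.image g with hX
  -- f : inverse of g on Y
  set f : α → α := fun x => if h : ∃ v ∈ Y, g v = x then h.choose else x with hf
  have hfg : ∀ v ∈ Y, f (g v) = v := by
    intro v hv
    have h : ∃ v' ∈ Y, g v' = g v := ⟨v, hv, rfl⟩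
    have := h.choose_spec
    rw [hf]
    simp only [dif_pos h]
    exact hginj this.1 hv this.2
  refine ⟨X, Y, f, ?_, hYW.trans hWV, ?_, hYcard, ?_, ?_, ?_, ?_⟩
  · intro x hx
    obtain ⟨v, hv, rfl⟩ := Finset.mem_image.1 hx
    exact (hgprop v hv).1
  · rw [hX, Finset.card_image_of_injOn hginj, hYcard]
  · intro x1 hx1 x2 hx2 heq
    simp only [hX, Finset.coe_image, Set.mem_image, Finset.mem_coe] at hx1 hx2
    obtain ⟨v1, hv1, rfl⟩ := hx1
    obtain ⟨v2, hv2, rfl⟩ := hx2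
    rw [hfg v1 hv1, hfg v2 hv2] at heq
    rw [heq]
  · ext y
    simp only [hX, Finset.mem_image]
    constructor
    · intro hy
      exact ⟨g y, ⟨y, hy, rfl⟩, hfg y hy⟩
    · rintro ⟨x, ⟨v, hv, rfl⟩, rfl⟩
      rw [hfg v hv]; exact hv
  · intro x hx
    obtain ⟨v, hv, rfl⟩ := Finset.mem_image.1 hx
    rw [hfg v hv]
    exact (hgprop v hv).2.1
  · intro x hx y hy hadj
    obtain ⟨v, hv, rfl⟩ := Finset.mem_image.1 hx
    rw [hfg v hv]
    exact (hgprop v hv).2.2 y (hYW hy) hadj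
end

section
/- Fix positive integers m, n, k and set f(n,k) = 2^(n+k) and g(n,k) = m·k^n. Let G be a graph and U, V disjoint vertex subsets with U an independent set, |U| ≥ f(n,k), and such that for every u ∈ U the induced subgraph of G on N(u) ∩ V contains an independent set of size g(n,k). Then either (1) there exist X ⊆ U and Y ⊆ V with |X| = |Y| = k such that the bipartite graph between X and Y in G is a perfect matching with no other edges (an induced matching of size k), or (2) there exist independent sets X ⊆ U and Y ⊆ V with |X| = n, |Y| = m such that every vertex of X is adjacent to every vertex of Y (an induced K_{n,m}). -/
open Finset

theorem aux5 {α : Type*} [DecidableEq α] (m : ℕ) (hm : 1 ≤ m) :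
    ∀ N n k, n + k ≤ N → 1 ≤ n → 1 ≤ k →
    ∀ (G : SimpleGraph α) (U V : Finset α), Disjoint U V →
    (∀ x ∈ U, ∀ y ∈ U, ¬ G.Adj x y) →
    2 ^ (n + k) ≤ U.card →
    (∀ u ∈ U, ∃ I : Finset α, I ⊆ V ∧ I.card = m * k ^ n ∧
      (∀ x ∈ I, G.Adj u x) ∧ (∀ x ∈ I, ∀ y ∈ I, ¬ G.Adj x y)) →
    (∃ (X Y : Finset α) (f : α → α), X ⊆ U ∧ Y ⊆ V ∧ X.card = k ∧ Y.card = k ∧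
      Set.InjOn f X ∧ Y = X.image f ∧ (∀ x ∈ X, G.Adj x (f x)) ∧
      (∀ x ∈ X, ∀ y ∈ Y, G.Adj x y → y = f x)) ∨
    (∃ X Y : Finset α, X ⊆ U ∧ Y ⊆ V ∧ X.card = n ∧ Y.card = m ∧
      (∀ x ∈ X, ∀ y ∈ X, ¬ G.Adj x y) ∧ (∀ x ∈ Y, ∀ y ∈ Y, ¬ G.Adj x y) ∧
      (∀ x ∈ X, ∀ y ∈ Y, G.Adj x y)) := by
  intro N
  induction N with
  | zero => intro n k hN hn hk; exact absurd hN (by omega)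
  | succ N ih =>
    intro n k hN hn hk G U V hUV hUindep hUcard hnbr
    classical
    choose! I hIV hIcard hIadj hIind using hnbr
    have hU0 : 0 < U.card := lt_of_lt_of_le (Nat.pow_pos (by norm_num)) hUcard
    obtain ⟨u, hu⟩ := Finset.card_pos.mp hU0
    -- base case k = 1 : a single edge
    by_cases hk1 : k = 1
    · subst hk1
      have hI0 : 0 < (I u).card := by
        rw [hIcard u hu]; simp; positivity
      obtain ⟨v, hv⟩ := Finset.card_pos.mp hI0
      left
      refine ⟨{u}, {v}, fun _ => v, ?_, ?_, rfl, rfl, ?_, ?_, ?_, ?_⟩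
      · simpa using hu
      · simpa using hIV u hu hv
      · intro x hx y hy _; simp at hx hy; simp [hx, hy]
      · simp
      · intro x hx; simp at hx; subst hx; exact hIadj _ hu v hv
      · intro x hx y hy _; simpa using hy
    -- base case n = 1 : a star K_{1,m}
    by_cases hn1 : n = 1
    · subst hn1
      right
      have hmI : m ≤ (I u).card := by
        rw [hIcard u hu]
        calc m = m * 1 := (mul_one m).symm
        _ ≤ m * k ^ 1 := Nat.mul_le_mul_left m (by simpa using hk)
      obtain ⟨Y, hYsub, hYcard⟩ := Finset.exists_subset_card_eq hmI
      refine ⟨{u}, Y, by simpa using hu, hYsub.trans (hIV u hu), rfl, hYcard, ?_, ?_, ?_⟩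
      · intro x hx y hy; simp at hx hy; subst hx; subst hy; exact G.irrefl
      · intro x hx y hy; exact hIind u hu x (hYsub hx) y (hYsub hy)
      · intro x hx y hy; simp at hx; subst hx; exact hIadj _ hu y (hYsub hy)
    have hk2 : 2 ≤ k := by omega
    have hn2 : 2 ≤ n := by omega
    -- split U \ {u}
    set P : α → Prop := fun w =>
      m * k ^ (n - 1) ≤ ((I u).filter (fun v => G.Adj w v)).card ∨
      m * k ^ (n - 1) ≤ ((I w).filter (fun v => G.Adj u v)).card with hPdef
    set E := (U.erase u).filter P with hEdef
    set D := (U.erase u).filter (fun w => ¬ P w) with hDdef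
    have hEsub : E ⊆ U := (filter_subset _ _).trans (erase_subset _ _)
    have hDsub : D ⊆ U := (filter_subset _ _).trans (erase_subset _ _)
    have hsplit : E.card + D.card = (U.erase u).card :=
      card_filter_add_card_filter_not (p := P)
    have herase : (U.erase u).card = U.card - 1 := card_erase_of_mem hu
    have hpow : 2 ^ (n + k) = 2 * 2 ^ (n + k - 1) := by
      rw [← pow_succ']
      congr 1
      omega
    rw [hpow] at hUcard
    have hcases : 2 ^ (n + k - 1) ≤ E.card ∨ 2 ^ (n + k - 1) ≤ D.card := by
      by_contra hc
      push_neg at hc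
      obtain ⟨h1, h2⟩ := hc
      set t := 2 ^ (n + k - 1) with ht
      omega
    rcases hcases with hE' | hD'
    · -- Case E : recurse towards K_{n-1,m} inside the neighbourhood of u
      have hne : ∀ w ∈ E, ∃ K : Finset α, K ⊆ V.filter (fun v => G.Adj u v) ∧
          K.card = m * k ^ (n - 1) ∧ (∀ x ∈ K, G.Adj w x) ∧
          (∀ x ∈ K, ∀ y ∈ K, ¬ G.Adj x y) := by
        intro w hw
        rw [hEdef, mem_filter] at hw
        obtain ⟨hw1, hw2⟩ := hw
        have hwU : w ∈ U := mem_of_mem_erase hw1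
        rcases hw2 with h | h
        · obtain ⟨K, hKsub, hKcard⟩ := Finset.exists_subset_card_eq h
          refine ⟨K, ?_, hKcard, ?_, ?_⟩
          · intro x hx
            have hx' := hKsub hx
            rw [mem_filter] at hx'
            exact mem_filter.mpr ⟨hIV u hu hx'.1, hIadj u hu x hx'.1⟩
          · intro x hx; exact (mem_filter.mp (hKsub hx)).2
          · intro x hx y hy
            exact hIind u hu x (mem_filter.mp (hKsub hx)).1 y (mem_filter.mp (hKsub hy)).1
        · obtain ⟨K, hKsub, hKcard⟩ := Finset.exists_subset_card_eq h
          refine ⟨K, ?_, hKcard, ?_, ?_⟩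
          · intro x hx
            have hx' := hKsub hx
            rw [mem_filter] at hx'
            exact mem_filter.mpr ⟨hIV w hwU hx'.1, hx'.2⟩
          · intro x hx; exact hIadj w hwU x (mem_filter.mp (hKsub hx)).1
          · intro x hx y hy
            exact hIind w hwU x (mem_filter.mp (hKsub hx)).1 y (mem_filter.mp (hKsub hy)).1
      have hWsub : V.filter (fun v => G.Adj u v) ⊆ V := filter_subset _ _
      have hrec := ih (n - 1) k (by omega) (by omega) hk G E (V.filter (fun v => G.Adj u v))
        (hUV.mono hEsub hWsub)
        (fun x hx y hy => hUindep x (hEsub hx) y (hEsub hy))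
        (by have h : (n - 1) + k = n + k - 1 := by omega
            rw [h]; exact hE')
        hne
      rcases hrec with hmatch | hK
      · left
        obtain ⟨X, Y, f, h1, h2, h3, h4, h5, h6, h7, h8⟩ := hmatch
        exact ⟨X, Y, f, h1.trans hEsub, h2.trans hWsub, h3, h4, h5, h6, h7, h8⟩
      · right
        obtain ⟨X, Y, h1, h2, h3, h4, h5, h6, h7⟩ := hK
        have huX : u ∉ X := by
          intro h
          exact (Finset.mem_erase.mp (Finset.mem_filter.mp (by rw [hEdef] at h1; exact h1 h)).1).1 rfl
        have hXU : insert u X ⊆ U := insert_subset hu (h1.trans hEsub)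
        refine ⟨insert u X, Y, hXU, h2.trans hWsub, ?_, h4, ?_, h6, ?_⟩
        · rw [card_insert_of_notMem huX, h3]; omega
        · intro x hx y hy; exact hUindep x (hXU hx) y (hXU hy)
        · intro x hx y hy
          rcases mem_insert.mp hx with hx' | hx'
          · rw [hx']; exact (mem_filter.mp (h2 hy)).2
          · exact h7 x hx' y hy
    · -- Case D : recurse towards a matching of size k-1 avoiding N(u)
      have hnotP : ∀ w ∈ D, ((I u).filter (fun v => G.Adj w v)).card < m * k ^ (n - 1) ∧
          ((I w).filter (fun v => G.Adj u v)).card < m * k ^ (n - 1) := by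
        intro w hw
        rw [hDdef, mem_filter] at hw
        have h2 := hw.2
        simp only [hPdef] at h2
        push_neg at h2
        exact h2
      have hkey : m * (k - 1) ^ n + m * k ^ (n - 1) ≤ m * k ^ n := by
        have h1 : (k - 1) ^ n ≤ (k - 1) * k ^ (n - 1) := by
          calc (k - 1) ^ n = (k - 1) * (k - 1) ^ (n - 1) := by
                rw [← pow_succ']; congr 1; omega
          _ ≤ (k - 1) * k ^ (n - 1) :=
                Nat.mul_le_mul_left _ (Nat.pow_le_pow_left (by omega) _)
        have h2 : (k - 1) * k ^ (n - 1) + k ^ (n - 1) = k ^ n := by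
          have hk' : k - 1 + 1 = k := by omega
          calc (k - 1) * k ^ (n - 1) + k ^ (n - 1) = ((k - 1) + 1) * k ^ (n - 1) := by ring
          _ = k * k ^ (n - 1) := by rw [hk']
          _ = k ^ n := by rw [← pow_succ']; congr 1; omega
        have h3 : (k - 1) ^ n + k ^ (n - 1) ≤ k ^ n := h2 ▸ Nat.add_le_add_right h1 _
        calc m * (k - 1) ^ n + m * k ^ (n - 1) = m * ((k - 1) ^ n + k ^ (n - 1)) := by ring
        _ ≤ m * k ^ n := Nat.mul_le_mul_left m h3
      have hWsub : V.filter (fun v => ¬ G.Adj u v) ⊆ V := filter_subset _ _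
      have hne : ∀ w ∈ D, ∃ K : Finset α, K ⊆ V.filter (fun v => ¬ G.Adj u v) ∧
          K.card = m * (k - 1) ^ n ∧ (∀ x ∈ K, G.Adj w x) ∧
          (∀ x ∈ K, ∀ y ∈ K, ¬ G.Adj x y) := by
        intro w hw
        have hwU : w ∈ U := hDsub hw
        have hlt2 := (hnotP w hw).2
        have hsum : ((I w).filter (fun v => G.Adj u v)).card +
            ((I w).filter (fun v => ¬ G.Adj u v)).card = (I w).card :=
          card_filter_add_card_filter_not (p := fun v => G.Adj u v)
        rw [hIcard w hwU] at hsum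
        have hJ : m * (k - 1) ^ n ≤ ((I w).filter (fun v => ¬ G.Adj u v)).card := by
          set A := m * (k - 1) ^ n with hA
          set B := m * k ^ (n - 1) with hB
          set C := m * k ^ n with hC
          omega
        obtain ⟨K, hKsub, hKcard⟩ := Finset.exists_subset_card_eq hJ
        refine ⟨K, ?_, hKcard, ?_, ?_⟩
        · intro x hx
          have hx' := hKsub hx
          rw [mem_filter] at hx'
          exact mem_filter.mpr ⟨hIV w hwU hx'.1, hx'.2⟩
        · intro x hx; exact hIadj w hwU x (mem_filter.mp (hKsub hx)).1
        · intro x hx y hy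
          exact hIind w hwU x (mem_filter.mp (hKsub hx)).1 y (mem_filter.mp (hKsub hy)).1
      have hrec := ih n (k - 1) (by omega) hn (by omega) G D (V.filter (fun v => ¬ G.Adj u v))
        (hUV.mono hDsub hWsub)
        (fun x hx y hy => hUindep x (hDsub hx) y (hDsub hy))
        (by have h : n + (k - 1) = n + k - 1 := by omega
            rw [h]; exact hD')
        hne
      rcases hrec with hmatch | hK
      · -- extend the matching by the edge u v₁
        obtain ⟨X', Y', f, hXD, hYW, hXc, hYc, hinj, hYim, hadjm, hmax⟩ := hmatch
        -- find v₁ ∈ I u with no neighbours in X'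
        have hvex : ∃ v ∈ I u, ∀ x ∈ X', ¬ G.Adj x v := by
          have hsum : ((I u).filter (fun v => ∀ x ∈ X', ¬ G.Adj x v)).card +
              ((I u).filter (fun v => ¬ ∀ x ∈ X', ¬ G.Adj x v)).card = (I u).card :=
            card_filter_add_card_filter_not (p := fun v => ∀ x ∈ X', ¬ G.Adj x v)
          rw [hIcard u hu] at hsum
          have hsub2 : (I u).filter (fun v => ¬ ∀ x ∈ X', ¬ G.Adj x v) ⊆
              X'.biUnion (fun x => (I u).filter (fun v => G.Adj x v)) := by
            intro v hv
            rw [mem_filter] at hv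
            obtain ⟨hv1, hv2⟩ := hv
            push_neg at hv2
            obtain ⟨x, hx, hadjxv⟩ := hv2
            exact mem_biUnion.mpr ⟨x, hx, mem_filter.mpr ⟨hv1, hadjxv⟩⟩
          have hb : ((I u).filter (fun v => ¬ ∀ x ∈ X', ¬ G.Adj x v)).card ≤
              X'.card * (m * k ^ (n - 1)) := by
            calc ((I u).filter (fun v => ¬ ∀ x ∈ X', ¬ G.Adj x v)).card ≤
                (X'.biUnion (fun x => (I u).filter (fun v => G.Adj x v))).card :=
                  card_le_card hsub2
            _ ≤ ∑ x ∈ X', ((I u).filter (fun v => G.Adj x v)).card := card_biUnion_le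
            _ ≤ ∑ x ∈ X', (m * k ^ (n - 1)) := by
                  apply Finset.sum_le_sum
                  intro x hx
                  exact le_of_lt (hnotP x (hXD hx)).1
            _ = X'.card * (m * k ^ (n - 1)) := by rw [Finset.sum_const, smul_eq_mul]
          rw [hXc] at hb
          have hBpos : 1 ≤ m * k ^ (n - 1) := Nat.one_le_iff_ne_zero.mpr (by positivity)
          have hCB : (k - 1) * (m * k ^ (n - 1)) + m * k ^ (n - 1) = m * k ^ n := by
            have hk' : k - 1 + 1 = k := by omega
            calc (k - 1) * (m * k ^ (n - 1)) + m * k ^ (n - 1)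
                = ((k - 1) + 1) * (m * k ^ (n - 1)) := by ring
            _ = k * (m * k ^ (n - 1)) := by rw [hk']
            _ = m * (k ^ (n - 1) * k) := by ring
            _ = m * k ^ n := by rw [← pow_succ]; congr 2; omega
          have hpos : 0 < ((I u).filter (fun v => ∀ x ∈ X', ¬ G.Adj x v)).card := by
            set B := m * k ^ (n - 1) with hB
            set C := m * k ^ n with hC
            omega
          obtain ⟨v, hv⟩ := Finset.card_pos.mp hpos
          rw [mem_filter] at hv
          exact ⟨v, hv.1, hv.2⟩
        obtain ⟨v₁, hv₁Iu, hv₁X'⟩ := hvex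
        have hv₁V : v₁ ∈ V := hIV u hu hv₁Iu
        have hadjuv₁ : G.Adj u v₁ := hIadj u hu v₁ hv₁Iu
        have hv₁Y' : v₁ ∉ Y' := fun h => (mem_filter.mp (hYW h)).2 hadjuv₁
        have huX' : u ∉ X' := by
          intro h
          exact (Finset.mem_erase.mp (Finset.mem_filter.mp (by rw [hDdef] at hXD; exact hXD h)).1).1 rfl
        have hnequ : ∀ z ∈ X', z ≠ u := fun z hz h => huX' (h ▸ hz)
        have hf' : ∀ z ∈ X', (if z = u then v₁ else f z) = f z :=
          fun z hz => if_neg (hnequ z hz)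
        left
        refine ⟨insert u X', insert v₁ Y', fun x => if x = u then v₁ else f x,
          insert_subset hu (hXD.trans hDsub), insert_subset hv₁V (hYW.trans hWsub),
          ?_, ?_, ?_, ?_, ?_, ?_⟩
        · rw [card_insert_of_notMem huX', hXc]; omega
        · rw [card_insert_of_notMem hv₁Y', hYc]; omega
        · intro x hx y hy hxy
          simp only [coe_insert, Set.mem_insert_iff, mem_coe] at hx hy
          dsimp only at hxy
          rcases hx with hx | hx <;> rcases hy with hy | hy
          · rw [hx, hy]
          · exfalso
            rw [hx, if_pos rfl, hf' y hy] at hxy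
            have hfy : f y ∈ Y' := by rw [hYim]; exact mem_image_of_mem f hy
            rw [← hxy] at hfy
            exact hv₁Y' hfy
          · exfalso
            rw [hy, if_pos rfl, hf' x hx] at hxy
            have hfx : f x ∈ Y' := by rw [hYim]; exact mem_image_of_mem f hx
            rw [hxy] at hfx
            exact hv₁Y' hfx
          · rw [hf' x hx, hf' y hy] at hxy
            exact hinj (mem_coe.mpr hx) (mem_coe.mpr hy) hxy
        · have himg : X'.image (fun x => if x = u then v₁ else f x) = X'.image f :=
            Finset.image_congr (fun x hx => hf' x hx)
          rw [image_insert, if_pos rfl, himg, ← hYim]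
        · intro x hx
          dsimp only
          rcases mem_insert.mp hx with hx' | hx'
          · rw [hx', if_pos rfl]; exact hadjuv₁
          · rw [if_neg (hnequ x hx')]; exact hadjm x hx'
        · intro x hx y hy hxyadj
          dsimp only
          rcases mem_insert.mp hx with hx' | hx' <;> rcases mem_insert.mp hy with hy' | hy'
          · rw [hx', hy', if_pos rfl]
          · rw [hx'] at hxyadj
            exact absurd hxyadj (mem_filter.mp (hYW hy')).2
          · rw [hy'] at hxyadj
            exact absurd hxyadj (hv₁X' x hx')
          · rw [if_neg (hnequ x hx')]
            exact hmax x hx' y hy' hxyadj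
      · right
        obtain ⟨X, Y, h1, h2, h3, h4, h5, h6, h7⟩ := hK
        exact ⟨X, Y, h1.trans hDsub, h2.trans hWsub, h3, h4, h5, h6, h7⟩



/-- Lemma 5.5 (fin): with `f(n,k) = 2^(n+k)` and `g(n,k) = m * k^n`, if `U` is an independent
set disjoint from `V` with `|U| ≥ f(n,k)` and every `u ∈ U` has an independent set of size
`g(n,k)` inside its neighbourhood in `V`, then either there is an induced matching of size `k`
between subsets of `U` and `V`, or an induced `K_{n,m}` with parts in `U` and `V`. -/
theorem stmt_5 {α : Type*} [DecidableEq α] (m n k : ℕ) (hm : 1 ≤ m) (hn : 1 ≤ n) (hk : 1 ≤ k)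
    (G : SimpleGraph α) (U V : Finset α) (hUV : Disjoint U V)
    (hUindep : ∀ x ∈ U, ∀ y ∈ U, ¬ G.Adj x y)
    (hUcard : 2 ^ (n + k) ≤ U.card)
    (hnbr : ∀ u ∈ U, ∃ I : Finset α, I ⊆ V ∧ I.card = m * k ^ n ∧
      (∀ x ∈ I, G.Adj u x) ∧ (∀ x ∈ I, ∀ y ∈ I, ¬ G.Adj x y)) :
    (∃ (X Y : Finset α) (f : α → α), X ⊆ U ∧ Y ⊆ V ∧ X.card = k ∧ Y.card = k ∧
      Set.InjOn f X ∧ Y = X.image f ∧ (∀ x ∈ X, G.Adj x (f x)) ∧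
      (∀ x ∈ X, ∀ y ∈ Y, G.Adj x y → y = f x)) ∨
    (∃ X Y : Finset α, X ⊆ U ∧ Y ⊆ V ∧ X.card = n ∧ Y.card = m ∧
      (∀ x ∈ X, ∀ y ∈ X, ¬ G.Adj x y) ∧ (∀ x ∈ Y, ∀ y ∈ Y, ¬ G.Adj x y) ∧
      (∀ x ∈ X, ∀ y ∈ Y, G.Adj x y)) := by
  exact aux5 m hm (n + k) n k le_rfl hn hk G U V hUV hUindep hUcard hnbr
end

section
/- Let G be a graph with a tree decomposition (T, {X_t}) of width at most k. Define, for each node t of T, the set B_t of edges of G incident with some vertex of X_t. Then (T, {B_t}) is a tree decomposition of the line graph L(G), and for each node t, the maximum independent set of L(G) restricted to B_t has size at most |X_t| ≤ k+1. In particular, the tree-independence number of L(G) is at most k+1. -/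
open SimpleGraph

/-- `(T, X)` is a tree decomposition of the graph `G`. -/
def IsTreeDecomp {V ι : Type*} (G : SimpleGraph V) (T : SimpleGraph ι) (X : ι → Set V) : Prop :=
  T.IsTree ∧
  (∀ v : V, ∃ t, v ∈ X t) ∧
  (∀ u v : V, G.Adj u v → ∃ t, u ∈ X t ∧ v ∈ X t) ∧
  (∀ v : V, (T.induce {t | v ∈ X t}).Connected)

lemma union_connected {ι : Type*} {T : SimpleGraph ι} {A B : Set ι}
    (hA : (T.induce A).Connected) (hB : (T.induce B).Connected)
    {t₀ : ι} (hA0 : t₀ ∈ A) (hB0 : t₀ ∈ B) : (T.induce (A ∪ B)).Connected := by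
  have hAs : A ⊆ A ∪ B := Set.subset_union_left
  have hBs : B ⊆ A ∪ B := Set.subset_union_right
  have key : ∀ x : (A ∪ B : Set ι), (T.induce (A ∪ B)).Reachable x ⟨t₀, hAs hA0⟩ := by
    rintro ⟨x, hx⟩
    rcases hx with hx | hx
    · exact (hA.preconnected ⟨x, hx⟩ ⟨t₀, hA0⟩).map (induceHomOfLE T hAs).toHom
    · exact (hB.preconnected ⟨x, hx⟩ ⟨t₀, hB0⟩).map (induceHomOfLE T hBs).toHom
  have hne : (T.induce (A ∪ B)).Connected ↔ _ := connected_iff _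
  rw [hne]
  exact ⟨fun x y => (key x).trans (key y).symm, ⟨⟨t₀, hAs hA0⟩⟩⟩

/-- Given a tree decomposition `(T, X)` of `G` of width at most `k`, replacing each bag `X t`
by the set `B t` of edges of `G` incident with a vertex of `X t` yields a tree decomposition of
the line graph `L(G)`, in which every independent set of `L(G)` inside a bag `B t` has size at
most `|X t| ≤ k + 1`. In particular, the tree-independence number of `L(G)` is at most `k + 1`. -/
theorem stmt_11 {V ι : Type*} [DecidableEq V] (G : SimpleGraph V) (T : SimpleGraph ι)
    (X : ι → Finset V) (k : ℕ)
    (hdec : IsTreeDecomp G T (fun t => (X t : Set V)))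
    (hw : ∀ t, (X t).card ≤ k + 1) :
    IsTreeDecomp G.lineGraph T
        (fun t => {e : G.edgeSet | ∃ v ∈ X t, v ∈ (e : Sym2 V)}) ∧
      ∀ t, ∀ I : Finset G.edgeSet,
        (∀ e ∈ I, ∃ v ∈ X t, v ∈ (e : Sym2 V)) →
        (∀ e ∈ I, ∀ f ∈ I, ¬ G.lineGraph.Adj e f) →
        I.card ≤ (X t).card ∧ I.card ≤ k + 1 := by
  obtain ⟨htree, hcov, hedge, hconn⟩ := hdec
  constructor
  · refine ⟨htree, ?_, ?_, ?_⟩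
    · -- every edge is in some bag
      rintro ⟨e, he⟩
      induction e using Sym2.ind with
      | _ u v =>
        obtain ⟨t, hu, _⟩ := hedge u v he
        exact ⟨t, u, hu, by simp⟩
    · -- adjacent edges share a bag
      rintro e f hef
      rw [lineGraph_adj_iff_exists] at hef
      obtain ⟨-, v, hve, hvf⟩ := hef
      obtain ⟨t, hvt⟩ := hcov v
      exact ⟨t, ⟨v, hvt, hve⟩, ⟨v, hvt, hvf⟩⟩
    · -- connectivity
      rintro ⟨e, he⟩
      induction e using Sym2.ind with
      | _ u v =>
        have hadj : G.Adj u v := he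
        have hset : {t | (⟨s(u,v), he⟩ : G.edgeSet) ∈
            {e : G.edgeSet | ∃ w ∈ X t, w ∈ (e : Sym2 V)}} =
            {t | u ∈ (X t : Set V)} ∪ {t | v ∈ (X t : Set V)} := by
          ext t
          simp only [Set.mem_setOf_eq, Set.mem_union, Finset.mem_coe]
          constructor
          · rintro ⟨w, hw, hwe⟩
            rcases Sym2.mem_iff.mp hwe with rfl | rfl
            · exact Or.inl hw
            · exact Or.inr hw
          · rintro (h | h)
            · exact ⟨u, h, by simp⟩
            · exact ⟨v, h, by simp⟩
        rw [hset]
        obtain ⟨t₀, hu0, hv0⟩ := hedge u v hadj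
        exact union_connected (hconn u) (hconn v) hu0 hv0
  · -- cardinality bound
    intro t I h1 h2
    classical
    have f : ∀ e ∈ I, V := fun e he => (h1 e he).choose
    have hmem : ∀ e (he : e ∈ I), (h1 e he).choose ∈ X t ∧ (h1 e he).choose ∈ (e : Sym2 V) := by
      intro e he
      obtain ⟨h, h'⟩ := (h1 e he).choose_spec
      exact ⟨h, h'⟩
    rcases I.eq_empty_or_nonempty with rfl | ⟨e₀, he₀⟩
    · simp
    haveI : Nonempty V := ⟨(h1 e₀ he₀).choose⟩
    have hcard : I.card ≤ (X t).card := by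
      apply Finset.card_le_card_of_injOn
        (fun e => if he : e ∈ I then (h1 e he).choose else Classical.arbitrary V)
      · intro e he
        simp only [Finset.mem_coe.mp he, dif_pos]
        exact (hmem e he).1
      · intro e he f hf heq
        simp only [Finset.mem_coe] at he hf
        simp only [he, hf, dif_pos] at heq
        by_contra hne
        apply h2 e he f hf
        rw [lineGraph_adj_iff_exists]
        exact ⟨hne, (h1 e he).choose, (hmem e he).2, heq ▸ (hmem f hf).2⟩
    exact ⟨hcard, le_trans hcard (hw t)⟩
end

section
/- Let r ≥ 1 be an odd integer, G a graph, and let x₁, x₂, y₁, y₂ be vertices such that in the r-th power G^r: x₁ and x₂ are non-adjacent, y₁ and y₂ are non-adjacent, x_i is adjacent to y_i for i = 1,2, and x_i is non-adjacent to y_j for i ≠ j. Let P₁ be a shortest x₁–y₁ path in G and P₂ a shortest x₂–y₂ path in G (both of length at most r). Then P₁ and P₂ are vertex-disjoint and there is no edge of G between a vertex of P₁ and a vertex of P₂. -/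
/-- The `r`-th power of a graph `G`: two distinct vertices are adjacent iff their distance
in `G` is at most `r` (i.e. iff some walk of length at most `r` joins them). -/
def SimpleGraph.power {V : Type*} (G : SimpleGraph V) (r : ℕ) : SimpleGraph V where
  Adj u v := u ≠ v ∧ ∃ p : G.Walk u v, p.length ≤ r
  symm := ⟨by
    rintro u v ⟨h, p, hp⟩
    exact ⟨h.symm, p.reverse, by simpa using hp⟩⟩
  loopless := ⟨by rintro u ⟨h, -⟩; exact h rfl⟩

lemma power_adj_of_walk {V : Type*} (G : SimpleGraph V) (r : ℕ) {u v : V} (h : u ≠ v)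
    (p : G.Walk u v) (hp : p.length ≤ r) : (G.power r).Adj u v := ⟨h, p, hp⟩

/-- For odd `r`, if in `G^r` the pairs `x₁x₂`, `y₁y₂`, `x₁y₂`, `x₂y₁` are non-adjacent while
`x₁y₁` and `x₂y₂` are adjacent, then any two shortest paths `P₁` from `x₁` to `y₁` and `P₂`
from `x₂` to `y₂` in `G` (of length at most `r`) are vertex-disjoint and anticomplete. -/
theorem stmt_13 {V : Type*} (G : SimpleGraph V) (r : ℕ) (hodd : Odd r) (hr : 1 ≤ r)
    (x₁ x₂ y₁ y₂ : V)
    (hxx : x₁ ≠ x₂) (hyy : y₁ ≠ y₂) (hxy12 : x₁ ≠ y₂) (hxy21 : x₂ ≠ y₁)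
    (hx : ¬ (G.power r).Adj x₁ x₂) (hy : ¬ (G.power r).Adj y₁ y₂)
    (h11 : (G.power r).Adj x₁ y₁) (h22 : (G.power r).Adj x₂ y₂)
    (h12 : ¬ (G.power r).Adj x₁ y₂) (h21 : ¬ (G.power r).Adj x₂ y₁)
    (P₁ : G.Walk x₁ y₁) (hP₁ : P₁.IsPath) (hP₁min : P₁.length = G.dist x₁ y₁)
    (hP₁len : P₁.length ≤ r)
    (P₂ : G.Walk x₂ y₂) (hP₂ : P₂.IsPath) (hP₂min : P₂.length = G.dist x₂ y₂)
    (hP₂len : P₂.length ≤ r) :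
    ∀ a ∈ P₁.support, ∀ b ∈ P₂.support, a ≠ b ∧ ¬ G.Adj a b := by
  classical
  intro a ha b hb
  have hn1 : (P₁.takeUntil a ha).length + (P₁.dropUntil a ha).length = P₁.length := by
    rw [← SimpleGraph.Walk.length_append, SimpleGraph.Walk.take_spec]
  have hn2 : (P₂.takeUntil b hb).length + (P₂.dropUntil b hb).length = P₂.length := by
    rw [← SimpleGraph.Walk.length_append, SimpleGraph.Walk.take_spec]
  obtain ⟨m, hm⟩ := hodd
  constructor
  · rintro rfl
    by_cases hle : (P₁.takeUntil a ha).length + (P₂.takeUntil a hb).length ≤ r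
    · exact hx ⟨hxx, (P₁.takeUntil a ha).append (P₂.takeUntil a hb).reverse, by
        simp only [SimpleGraph.Walk.length_append, SimpleGraph.Walk.length_reverse]; omega⟩
    · exact hy ⟨hyy, (P₁.dropUntil a ha).reverse.append (P₂.dropUntil a hb), by
        simp only [SimpleGraph.Walk.length_append, SimpleGraph.Walk.length_reverse]; omega⟩
  · intro hadj
    rcases lt_trichotomy ((P₁.takeUntil a ha).length + (P₂.takeUntil b hb).length) r with h1 | h1 | h1
    · exact hx ⟨hxx, (P₁.takeUntil a ha).append
        (SimpleGraph.Walk.cons hadj (P₂.takeUntil b hb).reverse), by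
        simp only [SimpleGraph.Walk.length_append, SimpleGraph.Walk.length_cons,
          SimpleGraph.Walk.length_reverse]; omega⟩
    · rcases lt_trichotomy (P₁.takeUntil a ha).length (P₂.takeUntil b hb).length with h2 | h2 | h2
      · exact h12 ⟨hxy12, (P₁.takeUntil a ha).append
          (SimpleGraph.Walk.cons hadj (P₂.dropUntil b hb)), by
          simp only [SimpleGraph.Walk.length_append, SimpleGraph.Walk.length_cons]; omega⟩
      · omega
      · exact h21 ⟨hxy21, (P₂.takeUntil b hb).append
          (SimpleGraph.Walk.cons hadj.symm (P₁.dropUntil a ha)), by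
          simp only [SimpleGraph.Walk.length_append, SimpleGraph.Walk.length_cons]; omega⟩
    · exact hy ⟨hyy, (P₁.dropUntil a ha).reverse.append
        (SimpleGraph.Walk.cons hadj (P₂.dropUntil b hb)), by
        simp only [SimpleGraph.Walk.length_append, SimpleGraph.Walk.length_cons,
          SimpleGraph.Walk.length_reverse]; omega⟩
end

section
/- Let G be a graph, let (A, Ā) be a partition of V(G), and suppose there exist a set D = {d₁,...,dₙ} of vertices and injective-on-indices choices l(dᵢ), r(dᵢ) of vertices such that: l(dᵢ)dᵢ is an edge with l(dᵢ)dᵢ ∈ A-side edges, r(dᵢ)dᵢ is an edge on the Ā-side, and the sets L = {l(dᵢ)}, D, R = {r(dᵢ)} are pairwise disjoint. Then in the line graph L(G), the vertex sets X = {l(dᵢ)dᵢ : i} and Y = {r(dᵢ)dᵢ : i} are independent sets with |X| = |Y| = n and the bipartite graph of L(G) between X and Y is a perfect matching (an induced matching of size n). -/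
open SimpleGraph

/-- A perfect triple `(L, D, R)` of size `n` (given by injective maps `l, d, r : Fin n → V`
with `l i - d i` and `r i - d i` edges of `G` and the images of `l`, `d`, `r` pairwise
disjoint) yields an induced matching of size `n` in the line graph `L(G)` between
`X = {l i - d i}` and `Y = {r i - d i}`: both families consist of `n` distinct edges, `X` and
`Y` are independent sets of `L(G)`, and `l i - d i` is adjacent to `r j - d j` iff `i = j`. -/
theorem stmt_18 {V : Type*} (G : SimpleGraph V) (n : ℕ) (d l r : Fin n → V)
    (hd : Function.Injective d) (hl : Function.Injective l) (hr : Function.Injective r)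
    (hladj : ∀ i, G.Adj (l i) (d i)) (hradj : ∀ i, G.Adj (r i) (d i))
    (hld : ∀ i j, l i ≠ d j) (hlr : ∀ i j, l i ≠ r j) (hdr : ∀ i j, d i ≠ r j) :
    Function.Injective
        (fun i : Fin n => (⟨s(l i, d i), G.mem_edgeSet.2 (hladj i)⟩ : G.edgeSet)) ∧
    Function.Injective
        (fun i : Fin n => (⟨s(r i, d i), G.mem_edgeSet.2 (hradj i)⟩ : G.edgeSet)) ∧
    (∀ i j : Fin n, i ≠ j →
      ¬ G.lineGraph.Adj ⟨s(l i, d i), G.mem_edgeSet.2 (hladj i)⟩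
        ⟨s(l j, d j), G.mem_edgeSet.2 (hladj j)⟩) ∧
    (∀ i j : Fin n, i ≠ j →
      ¬ G.lineGraph.Adj ⟨s(r i, d i), G.mem_edgeSet.2 (hradj i)⟩
        ⟨s(r j, d j), G.mem_edgeSet.2 (hradj j)⟩) ∧
    (∀ i j : Fin n,
      G.lineGraph.Adj ⟨s(l i, d i), G.mem_edgeSet.2 (hladj i)⟩
        ⟨s(r j, d j), G.mem_edgeSet.2 (hradj j)⟩ ↔ i = j) := by
  refine ⟨?_, ?_, ?_, ?_, ?_⟩
  · intro i j h
    simp only [Subtype.mk_eq_mk, Sym2.eq_iff] at h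
    rcases h with ⟨h1, h2⟩ | ⟨h1, h2⟩
    · exact hd h2
    · exact absurd h1 (hld i j)
  · intro i j h
    simp only [Subtype.mk_eq_mk, Sym2.eq_iff] at h
    rcases h with ⟨h1, h2⟩ | ⟨h1, h2⟩
    · exact hd h2
    · exact absurd h1 (hdr j i).symm
  · intro i j hij hadj
    rw [lineGraph_adj_iff_exists] at hadj
    obtain ⟨-, v, hv1, hv2⟩ := hadj
    simp only [Sym2.mem_iff] at hv1 hv2
    rcases hv1 with h1 | h1 <;> rcases hv2 with h2 | h2 <;> subst h1
    · exact hij (hl h2)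
    · exact hld i j h2
    · exact hld j i h2.symm
    · exact hij (hd h2)
  · intro i j hij hadj
    rw [lineGraph_adj_iff_exists] at hadj
    obtain ⟨-, v, hv1, hv2⟩ := hadj
    simp only [Sym2.mem_iff] at hv1 hv2
    rcases hv1 with h1 | h1 <;> rcases hv2 with h2 | h2 <;> subst h1
    · exact hij (hr h2)
    · exact hdr j i h2.symm
    · exact absurd h2 (hdr i j)
    · exact hij (hd h2)
  · intro i j
    rw [lineGraph_adj_iff_exists]
    constructor
    · rintro ⟨-, v, hv1, hv2⟩
      simp only [Sym2.mem_iff] at hv1 hv2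
      rcases hv1 with h1 | h1 <;> rcases hv2 with h2 | h2 <;> subst h1
      · exact absurd h2 (hlr i j)
      · exact absurd h2 (hld i j)
      · exact absurd h2 (hdr i j)
      · exact hd h2
    · rintro rfl
      refine ⟨?_, d i, ?_, ?_⟩
      · simp only [ne_eq, Subtype.mk_eq_mk, Sym2.eq_iff, not_or]
        exact ⟨fun ⟨h, _⟩ => hlr i i h, fun ⟨h, _⟩ => hld i i h⟩
      · simp
      · simp
end
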